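/- Hyperstability of the m-dimensional quadratic equation in modular spaces: Let X be a vector space over K, Y_ρ a convex modular space with the Δ₂-condition, E ⊆ X nonempty, symmetric about 0, closed under +, −, and scalar multiplication, and m ≥ 2. Let φ: E^m → [0,∞) satisfy lim_{n→∞} φ(x, nx, …, nx) = 0 and lim_{n→∞} φ(nx₁, …, nx_m) = 0. If f: E → Y_ρ satisfies ρ( f(∑_{i=1}^m x_i) + ∑_{1≤i<j≤m} f(x_i − x_j) − m∑_{i=1}^m f(x_i) ) ≤ φ(x₁,…,x_m) for all x₁,…,x_m ∈ E, then f(∑ x_i) + ∑_{i<j} f(x_i − x_j) = m∑ f(x_i) for all x₁,…,x_m ∈ E. -/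

import Mathlib

open Filter Topology

section MyAux

variable {Y : Type*} [AddCommGroup Y] [Module ℝ Y]

theorem my_rho_zero (ρ : Y → ℝ) (hzero : ∀ u, ρ u = 0 ↔ u = 0) : ρ 0 = 0 := (hzero 0).mpr rfl

theorem my_rho_neg (ρ : Y → ℝ) (habs : ∀ (c : ℝ) (u : Y), |c| = 1 → ρ (c • u) = ρ u)
    (u : Y) : ρ (-u) = ρ u := by
  have := habs (-1) u (by norm_num)
  simpa using this

theorem my_rho_scale (ρ : Y → ℝ) (hzero : ∀ u, ρ u = 0 ↔ u = 0)
    (hconv : ∀ (c d : ℝ) (u v : Y), 0 ≤ c → 0 ≤ d → c + d = 1 →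
      ρ (c • u + d • v) ≤ c * ρ u + d * ρ v)
    (c : ℝ) (hc0 : 0 ≤ c) (hc1 : c ≤ 1) (u : Y) : ρ (c • u) ≤ c * ρ u := by
  have h := hconv c (1 - c) u 0 hc0 (by linarith) (by ring)
  simpa [my_rho_zero ρ hzero] using h

theorem my_rho_add (ρ : Y → ℝ) (hnonneg : ∀ u, 0 ≤ ρ u)
    (hconv : ∀ (c d : ℝ) (u v : Y), 0 ≤ c → 0 ≤ d → c + d = 1 →
      ρ (c • u + d • v) ≤ c * ρ u + d * ρ v)
    (τ : ℝ) (hτ : 0 < τ) (hΔ₂ : ∀ u, ρ ((2 : ℝ) • u) ≤ τ * ρ u)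
    (u v : Y) : ρ (u + v) ≤ max 1 (τ/2) * (ρ u + ρ v) := by
  have h1 : ((2:ℝ)) • ((1/2 : ℝ) • u + (1/2 : ℝ) • v) = u + v := by
    rw [smul_add, smul_smul, smul_smul]; norm_num
  have h2 := hΔ₂ ((1/2 : ℝ) • u + (1/2 : ℝ) • v)
  rw [h1] at h2
  have h3 := hconv (1/2) (1/2) u v (by norm_num) (by norm_num) (by norm_num)
  have h4 : τ/2 ≤ max 1 (τ/2) := le_max_right _ _
  nlinarith [mul_le_mul_of_nonneg_left h3 hτ.le, hnonneg u, hnonneg v]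

theorem my_rho_finsum (ρ : Y → ℝ) (hnonneg : ∀ u, 0 ≤ ρ u) (hzero : ∀ u, ρ u = 0 ↔ u = 0)
    (hconv : ∀ (c d : ℝ) (u v : Y), 0 ≤ c → 0 ≤ d → c + d = 1 →
      ρ (c • u + d • v) ≤ c * ρ u + d * ρ v)
    (τ : ℝ) (hτ : 0 < τ) (hΔ₂ : ∀ u, ρ ((2 : ℝ) • u) ≤ τ * ρ u)
    {ι : Type*} (s : Finset ι) (u : ι → Y) :
    ρ (∑ i ∈ s, u i) ≤ (max 1 (τ/2)) ^ s.card * ∑ i ∈ s, ρ (u i) := by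
  classical
  have hK1 : (1:ℝ) ≤ max 1 (τ/2) := le_max_left _ _
  induction s using Finset.induction_on with
  | empty => simp [my_rho_zero ρ hzero]
  | @insert a s ha ih =>
    rw [Finset.sum_insert ha, Finset.sum_insert ha, Finset.card_insert_of_notMem ha]
    have h1 := my_rho_add ρ hnonneg hconv τ hτ hΔ₂ (u a) (∑ i ∈ s, u i)
    have hs : (0:ℝ) ≤ ∑ i ∈ s, ρ (u i) := Finset.sum_nonneg fun i _ => hnonneg _
    have hKp : (0:ℝ) < max 1 (τ/2) := lt_of_lt_of_le one_pos hK1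
    have hKn : (1:ℝ) ≤ (max 1 (τ/2)) ^ s.card := one_le_pow₀ hK1
    calc ρ (u a + ∑ i ∈ s, u i) ≤ max 1 (τ/2) * (ρ (u a) + ρ (∑ i ∈ s, u i)) := h1
      _ ≤ max 1 (τ/2) * (ρ (u a) + (max 1 (τ/2)) ^ s.card * ∑ i ∈ s, ρ (u i)) := by nlinarith
      _ ≤ (max 1 (τ/2)) ^ (s.card + 1) * (ρ (u a) + ∑ i ∈ s, ρ (u i)) := by
          rw [pow_succ]
          nlinarith [hnonneg (u a), mul_nonneg (mul_nonneg (sub_nonneg.2 hKn) hKp.le) (hnonneg (u a))]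

theorem my_rho_nsmul (ρ : Y → ℝ) (hnonneg : ∀ u, 0 ≤ ρ u) (hzero : ∀ u, ρ u = 0 ↔ u = 0)
    (hconv : ∀ (c d : ℝ) (u v : Y), 0 ≤ c → 0 ≤ d → c + d = 1 →
      ρ (c • u + d • v) ≤ c * ρ u + d * ρ v)
    (τ : ℝ) (hτ : 0 < τ) (hΔ₂ : ∀ u, ρ ((2 : ℝ) • u) ≤ τ * ρ u)
    (k : ℕ) (u : Y) :
    ρ (k • u) ≤ (max 1 (τ/2)) ^ k * (k * ρ u) := by
  have h : k • u = ∑ _i ∈ Finset.range k, u := by simp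
  rw [h]
  have := my_rho_finsum ρ hnonneg hzero hconv τ hτ hΔ₂ (Finset.range k) (fun _ => u)
  simpa [Finset.card_range, mul_comm] using this

theorem my_rho_le_nsmul (ρ : Y → ℝ) (hnonneg : ∀ u, 0 ≤ ρ u) (hzero : ∀ u, ρ u = 0 ↔ u = 0)
    (hconv : ∀ (c d : ℝ) (u v : Y), 0 ≤ c → 0 ≤ d → c + d = 1 →
      ρ (c • u + d • v) ≤ c * ρ u + d * ρ v)
    (k : ℕ) (hk : 1 ≤ k) (u : Y) : ρ u ≤ ρ (k • u) := by
  have hk' : (0:ℝ) < k := by exact_mod_cast hk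
  have h1 : ((1 : ℝ)/k) • ((k:ℝ) • u) = u := by
    rw [smul_smul]; field_simp; rw [one_smul]
  have h2 : (k:ℝ) • u = k • u := by
    rw [Nat.cast_smul_eq_nsmul]
  have h3 := my_rho_scale ρ hzero hconv (1/k) (by positivity) (by
    rw [div_le_one hk']; exact_mod_cast hk) ((k:ℝ) • u)
  rw [h1, h2] at h3
  have : (1:ℝ)/k * ρ (k • u) ≤ ρ (k • u) := by
    have h4 : (1:ℝ) ≤ (k:ℝ) := by exact_mod_cast hk
    rw [div_mul_eq_mul_div, one_mul, div_le_iff₀ hk']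
    nlinarith [hnonneg (k • u)]
  linarith

theorem my_rho_add3 (ρ : Y → ℝ) (hnonneg : ∀ u, 0 ≤ ρ u)
    (habs : ∀ (c : ℝ) (u : Y), |c| = 1 → ρ (c • u) = ρ u)
    (hconv : ∀ (c d : ℝ) (u v : Y), 0 ≤ c → 0 ≤ d → c + d = 1 →
      ρ (c • u + d • v) ≤ c * ρ u + d * ρ v)
    (τ : ℝ) (hτ : 0 < τ) (hΔ₂ : ∀ u, ρ ((2 : ℝ) • u) ≤ τ * ρ u)
    (u v w : Y) : ρ (u + v - w) ≤ (max 1 (τ/2))^2 * (ρ u + ρ v + ρ w) := by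
  have hK1 : (1:ℝ) ≤ max 1 (τ/2) := le_max_left _ _
  have he : u + v - w = (u + v) + (-w) := by abel
  rw [he]
  have h1 := my_rho_add ρ hnonneg hconv τ hτ hΔ₂ (u + v) (-w)
  have h2 := my_rho_add ρ hnonneg hconv τ hτ hΔ₂ u v
  rw [my_rho_neg ρ habs w] at h1
  have hKnn : (0:ℝ) ≤ max 1 (τ/2) := by positivity
  have h5 := mul_le_mul_of_nonneg_left h2 hKnn
  have h6 : (0:ℝ) ≤ (max 1 (τ/2)) * ((max 1 (τ/2)) - 1) * ρ w :=
    mul_nonneg (mul_nonneg hKnn (by linarith)) (hnonneg w)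
  nlinarith [h1, h5, h6]

theorem my_rho_add4 (ρ : Y → ℝ) (hnonneg : ∀ u, 0 ≤ ρ u)
    (habs : ∀ (c : ℝ) (u : Y), |c| = 1 → ρ (c • u) = ρ u)
    (hconv : ∀ (c d : ℝ) (u v : Y), 0 ≤ c → 0 ≤ d → c + d = 1 →
      ρ (c • u + d • v) ≤ c * ρ u + d * ρ v)
    (τ : ℝ) (hτ : 0 < τ) (hΔ₂ : ∀ u, ρ ((2 : ℝ) • u) ≤ τ * ρ u)
    (u v w t : Y) : ρ (u + v - w - t) ≤ (max 1 (τ/2))^2 * (ρ u + ρ v + ρ w + ρ t) := by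
  have hK1 : (1:ℝ) ≤ max 1 (τ/2) := le_max_left _ _
  have he : u + v - w - t = (u + v) + (-w + -t) := by abel
  rw [he]
  have h1 := my_rho_add ρ hnonneg hconv τ hτ hΔ₂ (u + v) (-w + -t)
  have h2 := my_rho_add ρ hnonneg hconv τ hτ hΔ₂ u v
  have h3 := my_rho_add ρ hnonneg hconv τ hτ hΔ₂ (-w) (-t)
  rw [my_rho_neg ρ habs w, my_rho_neg ρ habs t] at h3
  have hKnn : (0:ℝ) ≤ max 1 (τ/2) := by positivity
  nlinarith [hnonneg u, hnonneg v, hnonneg w, hnonneg t,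
    mul_le_mul_of_nonneg_left h2 hKnn, mul_le_mul_of_nonneg_left h3 hKnn]

theorem my_sum_if_eq {A : Type*} [AddCommMonoid A] (m : ℕ) (hm : 1 ≤ m) (i0 : Fin m) (a b : A) :
    ∑ i : Fin m, (if i = i0 then a else b) = a + (m - 1) • b := by
  classical
  rw [Finset.sum_ite]
  rw [Finset.filter_eq' Finset.univ i0, Finset.filter_ne' Finset.univ i0]
  simp [Finset.sum_const, Finset.card_erase_of_mem, Finset.card_univ]

theorem my_T2_ne {m : ℕ} (hm : 1 ≤ m) (p : Fin m × Fin m) (hp : p.1 < p.2) :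
    p.2 ≠ (⟨0, by omega⟩ : Fin m) := by
  intro h
  rw [h] at hp
  have h2 : (p.1 : ℕ) < 0 := by simpa using Fin.lt_def.mp hp
  omega

theorem my_card_T1 (m : ℕ) (hm : 1 ≤ m) :
    ((Finset.univ.filter (fun p : Fin m × Fin m => p.1 < p.2)).filter
        (fun p => p.1 = (⟨0, by omega⟩ : Fin m))).card = m - 1 := by
  classical
  set i0 : Fin m := ⟨0, by omega⟩ with hi0
  rw [Finset.card_bij' (i := fun (p : Fin m × Fin m) (_ : p ∈ _) => p.2)
    (j := fun (a : Fin m) (_ : a ∈ Finset.univ.erase i0) => (i0, a))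
    (hi := ?_) (hj := ?_) (left_inv := ?_) (right_inv := ?_)]
  · simp [Finset.card_erase_of_mem, Finset.card_univ]
  · intro p hp
    simp only [Finset.mem_filter, Finset.mem_univ, true_and] at hp
    simp only [Finset.mem_erase, Finset.mem_univ, and_true]
    exact my_T2_ne hm p hp.1
  · intro a ha
    simp only [Finset.mem_erase, Finset.mem_univ, and_true] at ha
    have hlt : i0 < a := by
      rw [Fin.lt_def]
      have : a.val ≠ 0 := fun h => ha (Fin.ext h)
      simp only [hi0]
      omega
    simp [Finset.mem_filter, hlt]
  · intro p hp
    simp only [Finset.mem_filter, Finset.mem_univ, true_and] at hp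
    show (i0, p.2) = p
    rw [← hp.2]
  · intro a ha
    rfl

theorem my_pair_sum {X A : Type*} [AddCommGroup X] [AddCommMonoid A]
    (m : ℕ) (hm : 1 ≤ m) (g : X → A) (hg0 : g 0 = 0) (n : ℕ) (z : X) :
    ∑ p ∈ Finset.univ.filter (fun p : Fin m × Fin m => p.1 < p.2),
        g ((if p.1 = (⟨0, by omega⟩ : Fin m) then z else n • z)
          - (if p.2 = (⟨0, by omega⟩ : Fin m) then z else n • z))
      = (m - 1) • g (z - n • z) := by
  classical
  set i0 : Fin m := ⟨0, by omega⟩ with hi0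
  have step : ∀ p ∈ Finset.univ.filter (fun p : Fin m × Fin m => p.1 < p.2),
      g ((if p.1 = i0 then z else n • z) - (if p.2 = i0 then z else n • z))
        = if p.1 = i0 then g (z - n • z) else 0 := by
    intro p hp
    simp only [Finset.mem_filter, Finset.mem_univ, true_and] at hp
    rw [if_neg (my_T2_ne hm p hp)]
    by_cases h : p.1 = i0
    · rw [if_pos h, if_pos h]
    · rw [if_neg h, if_neg h, sub_self, hg0]
  rw [Finset.sum_congr rfl step, Finset.sum_ite, Finset.sum_const_zero, add_zero,
    Finset.sum_const, my_card_T1 m hm]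

def myL (m : ℕ) {X Y : Type*} [AddCommGroup X] [AddCommGroup Y] (x : Fin m → X) (g : X → Y) : Y :=
  g (∑ i, x i)
    + ∑ p ∈ Finset.univ.filter (fun p : Fin m × Fin m => p.1 < p.2), g (x p.1 - x p.2)
    - m • ∑ i, g (x i)

variable {X : Type*} [AddCommGroup X] {m : ℕ} (x : Fin m → X)

theorem myL_add (g h : X → Y) :
    myL m x (fun z => g z + h z) = myL m x g + myL m x h := by
  unfold myL
  beta_reduce
  rw [Finset.sum_add_distrib, Finset.sum_add_distrib, nsmul_add]
  abel

theorem myL_sub (g h : X → Y) :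
    myL m x (fun z => g z - h z) = myL m x g - myL m x h := by
  unfold myL
  beta_reduce
  rw [Finset.sum_sub_distrib, Finset.sum_sub_distrib, nsmul_sub]
  abel

theorem myL_smul (k : ℕ) (g : X → Y) :
    myL m x (fun z => k • g z) = k • myL m x g := by
  unfold myL
  simp only [smul_sub, smul_add, ← Finset.smul_sum, smul_comm k m]

theorem myL_comp (g : X → X) (hsub : ∀ a b, g (a - b) = g a - g b)
    (hsum : g (∑ i, x i) = ∑ i, g (x i)) (f : X → Y) :
    myL m x (fun z => f (g z)) = myL m (fun i => g (x i)) f := by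
  unfold myL
  simp only []
  rw [hsum]
  congr 1
  congr 1
  exact Finset.sum_congr rfl fun p _ => by rw [hsub]

theorem my_P_form (m : ℕ) (hm : 2 ≤ m) (f : X → Y) (f0 : f 0 = 0) (k : ℕ) (z : X) :
    myL m (fun i => if i = (⟨0, Nat.lt_of_lt_of_le (by norm_num) hm⟩ : Fin m) then z else (k+1) • z) f
    = f ((1 + (m-1)*(k+1)) • z) + (m-1) • f (k • (-z))
      - (m • f z + (m*(m-1)) • f ((k+1) • z)) := by
  have hm1 : 1 ≤ m := by omega
  have e1 : ∑ i : Fin m, (if i = (⟨0, Nat.lt_of_lt_of_le (by norm_num) hm⟩ : Fin m) then z else (k+1) • z)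
      = (1 + (m-1)*(k+1)) • z := by
    rw [my_sum_if_eq m hm1, add_smul 1 ((m-1)*(k+1)) z, one_smul, mul_smul (m-1) (k+1) z]
  have e2 : z - (k+1) • z = k • (-z) := by
    rw [succ_nsmul, smul_neg]
    abel
  have e3 : ∑ i : Fin m, f (if i = (⟨0, Nat.lt_of_lt_of_le (by norm_num) hm⟩ : Fin m) then z else (k+1) • z)
      = f z + (m-1) • f ((k+1) • z) := by
    rw [Finset.sum_congr rfl fun i _ => apply_ite f _ _ _, my_sum_if_eq m hm1]
  unfold myL
  rw [e1, e3, my_pair_sum m hm1 f f0 (k+1) z, e2, smul_add, smul_smul m (m-1)]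

end MyAux

theorem mdim_quadratic_hyperstability_modular
    {K : Type*} [Field K] {X : Type*} [AddCommGroup X] [Module K X]
    {Y : Type*} [AddCommGroup Y] [Module ℝ Y] (ρ : Y → ℝ)
    (hnonneg : ∀ u, 0 ≤ ρ u)
    (hzero : ∀ u, ρ u = 0 ↔ u = 0)
    (habs : ∀ (c : ℝ) (u : Y), |c| = 1 → ρ (c • u) = ρ u)
    (hconv : ∀ (c d : ℝ) (u v : Y), 0 ≤ c → 0 ≤ d → c + d = 1 →
      ρ (c • u + d • v) ≤ c * ρ u + d * ρ v)
    (τ : ℝ) (hτ : 0 < τ) (hΔ₂ : ∀ u, ρ ((2 : ℝ) • u) ≤ τ * ρ u)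
    (E : Set X) (hEne : E.Nonempty)
    (hEneg : ∀ x ∈ E, -x ∈ E)
    (hEadd : ∀ x ∈ E, ∀ y ∈ E, x + y ∈ E)
    (hEsub : ∀ x ∈ E, ∀ y ∈ E, x - y ∈ E)
    (hEsmul : ∀ (k : K), ∀ x ∈ E, k • x ∈ E)
    (m : ℕ) (hm : 2 ≤ m)
    (φ : (Fin m → X) → ℝ) (hφnonneg : ∀ x, 0 ≤ φ x)
    (hφ1 : ∀ x ∈ E,
      Tendsto (fun n : ℕ => φ (fun i => if i = ⟨0, by omega⟩ then x else n • x))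
        atTop (𝓝 0))
    (hφ2 : ∀ x : Fin m → X, (∀ i, x i ∈ E) →
      Tendsto (fun n : ℕ => φ (fun i => n • x i)) atTop (𝓝 0))
    (f : X → Y)
    (hf : ∀ x : Fin m → X, (∀ i, x i ∈ E) →
      ρ (f (∑ i, x i)
          + ∑ p ∈ Finset.univ.filter (fun p : Fin m × Fin m => p.1 < p.2),
              f (x p.1 - x p.2)
          - m • ∑ i, f (x i)) ≤ φ x) :
    ∀ x : Fin m → X, (∀ i, x i ∈ E) →
      f (∑ i, x i)
        + ∑ p ∈ Finset.univ.filter (fun p : Fin m × Fin m => p.1 < p.2),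
            f (x p.1 - x p.2)
        = m • ∑ i, f (x i) := by
  classical
  -- basic membership facts
  have hE0 : (0:X) ∈ E := by
    obtain ⟨e, he⟩ := hEne
    have := hEsmul 0 e he
    simpa using this
  have hEnsmul : ∀ (k : ℕ), ∀ z ∈ E, k • z ∈ E := by
    intro k
    induction k with
    | zero => intro z hz; simpa using hE0
    | succ k ih =>
      intro z hz
      rw [succ_nsmul]
      exact hEadd _ (ih z hz) _ hz
  have hEsum : ∀ (y : Fin m → X), (∀ i, y i ∈ E) → (∑ i, y i) ∈ E := by
    intro y hy
    exact Finset.sum_induction y (· ∈ E) (fun a b ha hb => hEadd a ha b hb) hE0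
      (fun i _ => hy i)
  -- restated main hypothesis
  have hD : ∀ y : Fin m → X, (∀ i, y i ∈ E) → ρ (myL m y f) ≤ φ y := fun y hy => hf y hy
  -- constants
  set Kc : ℝ := max 1 (τ/2) with hKc
  have hK1 : (1:ℝ) ≤ Kc := le_max_left _ _
  have hKnn : (0:ℝ) ≤ Kc := by positivity
  set T : Finset (Fin m × Fin m) :=
    Finset.univ.filter (fun p : Fin m × Fin m => p.1 < p.2) with hT
  -- f 0 = 0
  have f0 : f 0 = 0 := by
    have hφ0 : φ (fun _ => (0:X)) = 0 := by
      have t := hφ2 (fun _ => 0) (fun _ => hE0)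
      have he : (fun n : ℕ => φ (fun i => n • (0:X))) = fun _ : ℕ => φ (fun _ => (0:X)) := by
        funext n
        congr 1
        funext i
        exact smul_zero n
      rw [he] at t
      exact (tendsto_nhds_unique tendsto_const_nhds t)
    have hb := hD (fun _ => 0) (fun _ => hE0)
    rw [hφ0] at hb
    have hbe : myL m (fun _ : Fin m => (0:X)) f = (1 + T.card) • f 0 - (m * m) • f 0 := by
      unfold myL
      rw [← hT]
      simp only [sub_zero, Finset.sum_const, Finset.card_univ, Fintype.card_fin, smul_zero,
        smul_smul, add_smul, one_smul]
    rw [hbe] at hb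
    have hcard : T.card + 2 ≤ m * m := by
      have hsub : T ⊆ Finset.univ \ {((⟨0, by omega⟩ : Fin m), (⟨0, by omega⟩ : Fin m)),
          ((⟨1, by omega⟩ : Fin m), (⟨0, by omega⟩ : Fin m))} := by
        intro p hp
        simp only [hT, Finset.mem_filter, Finset.mem_univ, true_and] at hp
        simp only [Finset.mem_sdiff, Finset.mem_univ, true_and, Finset.mem_insert,
          Finset.mem_singleton]
        intro h
        rcases h with h | h
        · rw [h] at hp; exact lt_irrefl _ hp
        · rw [h] at hp
          have := Fin.lt_def.mp hp
          simp at this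
      have hc2 : ({((⟨0, by omega⟩ : Fin m), (⟨0, by omega⟩ : Fin m)),
          ((⟨1, by omega⟩ : Fin m), (⟨0, by omega⟩ : Fin m))} :
            Finset (Fin m × Fin m)).card = 2 := by
        rw [Finset.card_insert_of_notMem (by simp [Prod.ext_iff, Fin.ext_iff]),
          Finset.card_singleton]
      have hcc := Finset.card_le_card hsub
      rw [Finset.card_sdiff_of_subset (Finset.subset_univ _), hc2, Finset.card_univ,
        Fintype.card_prod, Fintype.card_fin] at hcc
      have h4 : 2 * 2 ≤ m * m := Nat.mul_le_mul hm hm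
      omega
    have hρ0 : ρ ((1 + T.card) • f 0 - (m * m) • f 0) = 0 :=
      le_antisymm hb (hnonneg _)
    have helt : (1 + T.card) • f 0 - (m * m) • f 0 = 0 := (hzero _).mp hρ0
    have h2 : (m * m) • f 0 = (1 + T.card) • f 0 := (sub_eq_zero.mp helt).symm
    have hq : (m * m - (1 + T.card)) • f 0 = 0 := by
      have hsum : (1 + T.card) + (m * m - (1 + T.card)) = m * m := by omega
      have hadd := add_smul (1 + T.card) (m * m - (1 + T.card)) (f 0)
      rw [hsum, h2] at hadd
      exact (left_eq_add.mp hadd)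
    have hqne : ((m * m - (1 + T.card) : ℕ) : ℝ) ≠ 0 := by
      have h1m : 1 ≤ m * m - (1 + T.card) := by omega
      exact_mod_cast Nat.one_le_iff_ne_zero.mp h1m
    have hres : ((m * m - (1 + T.card) : ℕ) : ℝ) • f 0 = 0 := by
      rw [Nat.cast_smul_eq_nsmul]; exact hq
    have hfin : f 0 = (((m * m - (1 + T.card) : ℕ) : ℝ))⁻¹
        • (((m * m - (1 + T.card) : ℕ) : ℝ) • f 0) := by
      rw [smul_smul, inv_mul_cancel₀ hqne, one_smul]
    rw [hfin, hres, smul_zero]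
  -- main argument
  intro x hx
  rw [← sub_eq_zero]
  show myL m x f = 0
  set i0 : Fin m := ⟨0, by omega⟩ with hi0
  set S : X := ∑ i, x i with hS
  have hSE : S ∈ E := hEsum x hx
  -- the six control sequences
  set A1 : ℕ → ℝ := fun k => φ (fun i => (1 + (m-1)*(k+1)) • x i) with hA1
  set A2 : ℕ → ℝ := fun k => φ (fun i => k • (-x i)) with hA2
  set A3 : ℕ → ℝ := fun k => φ (fun i => (k+1) • x i) with hA3
  set A4 : ℕ → ℝ := fun k => φ (fun i => if i = i0 then S else (k+1) • S) with hA4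
  set A5 : ℕ → ℝ := fun k => ∑ p ∈ T,
    φ (fun i => if i = i0 then x p.1 - x p.2 else (k+1) • (x p.1 - x p.2)) with hA5
  set A6 : ℕ → ℝ := fun k => ∑ j : Fin m,
    φ (fun i => if i = i0 then x j else (k+1) • (x j)) with hA6
  set R : ℕ → ℝ := fun k => Kc^2 * (A1 k + Kc^(m-1) * (((m-1 : ℕ) : ℝ) * A2 k)
    + Kc^(m*(m-1)) * (((m*(m-1) : ℕ) : ℝ) * A3 k)
    + Kc^2 * (A4 k + Kc^(T.card) * A5 k + Kc^m * ((m : ℝ) * (Kc^m * A6 k)))) with hR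
  -- key bound
  have key : ∀ k : ℕ, ρ (myL m x f) ≤ R k := by
    intro k
    set N1 : ℕ := 1 + (m-1)*(k+1) with hN1
    set Pn : X → Y := fun z => myL m (fun i => if i = i0 then z else (k+1) • z) f with hPn
    have hPform : ∀ z, Pn z = f (N1 • z) + (m-1) • f (k • (-z))
        - (m • f z + (m*(m-1)) • f ((k+1) • z)) := fun z => my_P_form m hm f f0 k z
    set L1 : Y := myL m (fun i => N1 • x i) f with hL1
    set L2 : Y := myL m (fun i => k • (-x i)) f with hL2
    set L3 : Y := myL m (fun i => (k+1) • x i) f with hL3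
    set Wn : Y := myL m x Pn with hWn
    have hc1 : myL m x (fun z => f (N1 • z)) = L1 :=
      myL_comp x (fun z => N1 • z) (fun a b => smul_sub N1 a b) (Finset.smul_sum) f
    have hc2 : myL m x (fun z => f (k • (-z))) = L2 := by
      refine myL_comp x (fun z => k • (-z)) ?_ ?_ f
      · intro a b
        simp only [smul_neg, smul_sub]
        abel
      · simp only [smul_neg, ← Finset.smul_sum, Finset.sum_neg_distrib]
    have hc3 : myL m x (fun z => f ((k+1) • z)) = L3 :=
      myL_comp x (fun z => (k+1) • z) (fun a b => smul_sub (k+1) a b) (Finset.smul_sum) f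
    have hW : Wn = (L1 + (m-1) • L2) - (m • myL m x f + (m*(m-1)) • L3) := by
      have s1 : Pn = fun z => (f (N1 • z) + (m-1) • f (k • (-z)))
          - (m • f z + (m*(m-1)) • f ((k+1) • z)) := funext fun z => hPform z
      have s2 : myL m x (fun z => (f (N1 • z) + (m-1) • f (k • (-z)))
            - (m • f z + (m*(m-1)) • f ((k+1) • z)))
          = myL m x (fun z => f (N1 • z) + (m-1) • f (k • (-z)))
            - myL m x (fun z => m • f z + (m*(m-1)) • f ((k+1) • z)) := myL_sub x _ _
      have s3 : myL m x (fun z => f (N1 • z) + (m-1) • f (k • (-z)))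
          = myL m x (fun z => f (N1 • z)) + myL m x (fun z => (m-1) • f (k • (-z))) :=
        myL_add x _ _
      have s4 : myL m x (fun z => m • f z + (m*(m-1)) • f ((k+1) • z))
          = myL m x (fun z => m • f z) + myL m x (fun z => (m*(m-1)) • f ((k+1) • z)) :=
        myL_add x _ _
      have s5 : myL m x (fun z => (m-1) • f (k • (-z)))
          = (m-1) • myL m x (fun z => f (k • (-z))) := myL_smul x _ _
      have s6 : myL m x (fun z => m • f z) = m • myL m x f := myL_smul x _ _
      have s7 : myL m x (fun z => (m*(m-1)) • f ((k+1) • z))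
          = (m*(m-1)) • myL m x (fun z => f ((k+1) • z)) := myL_smul x _ _
      rw [hWn, s1, s2, s3, s4, s5, s6, s7, hc1, hc2, hc3]
    have hiden : m • myL m x f = L1 + (m-1) • L2 - (m*(m-1)) • L3 - Wn := by
      rw [hW]; abel
    -- membership facts for the tuples
    have hx1 : ∀ i, N1 • x i ∈ E := fun i => hEnsmul _ _ (hx i)
    have hx2 : ∀ i, k • (-x i) ∈ E := fun i => hEnsmul _ _ (hEneg _ (hx i))
    have hx3 : ∀ i, (k+1) • x i ∈ E := fun i => hEnsmul _ _ (hx i)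
    have htup : ∀ z ∈ E, ∀ i : Fin m, (if i = i0 then z else (k+1) • z) ∈ E := by
      intro z hz i
      by_cases h : i = i0
      · rw [if_pos h]; exact hz
      · rw [if_neg h]; exact hEnsmul _ _ hz
    -- rho bounds
    have b1 : ρ L1 ≤ A1 k := hD _ hx1
    have bL2 : ρ L2 ≤ A2 k := hD _ hx2
    have bL3 : ρ L3 ≤ A3 k := hD _ hx3
    have b2 : ρ ((m-1) • L2) ≤ Kc^(m-1) * (((m-1 : ℕ) : ℝ) * A2 k) := by
      calc ρ ((m-1) • L2) ≤ Kc^(m-1) * (((m-1 : ℕ) : ℝ) * ρ L2) :=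
            my_rho_nsmul ρ hnonneg hzero hconv τ hτ hΔ₂ (m-1) L2
        _ ≤ Kc^(m-1) * (((m-1 : ℕ) : ℝ) * A2 k) := by gcongr
    have b3 : ρ ((m*(m-1)) • L3) ≤ Kc^(m*(m-1)) * (((m*(m-1) : ℕ) : ℝ) * A3 k) := by
      calc ρ ((m*(m-1)) • L3) ≤ Kc^(m*(m-1)) * (((m*(m-1) : ℕ) : ℝ) * ρ L3) :=
            my_rho_nsmul ρ hnonneg hzero hconv τ hτ hΔ₂ (m*(m-1)) L3
        _ ≤ Kc^(m*(m-1)) * (((m*(m-1) : ℕ) : ℝ) * A3 k) := by gcongr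
    have b4 : ρ Wn ≤ Kc^2 * (A4 k + Kc^(T.card) * A5 k + Kc^m * ((m : ℝ) * (Kc^m * A6 k))) := by
      have hWne : Wn = Pn S + ∑ p ∈ T, Pn (x p.1 - x p.2) - m • ∑ j, Pn (x j) := rfl
      rw [hWne]
      have c4 : ρ (Pn S) ≤ A4 k := hD _ (htup S hSE)
      have c5 : ρ (∑ p ∈ T, Pn (x p.1 - x p.2)) ≤ Kc^(T.card) * A5 k := by
        calc ρ (∑ p ∈ T, Pn (x p.1 - x p.2))
            ≤ Kc^(T.card) * ∑ p ∈ T, ρ (Pn (x p.1 - x p.2)) :=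
              my_rho_finsum ρ hnonneg hzero hconv τ hτ hΔ₂ T _
          _ ≤ Kc^(T.card) * A5 k := by
              have hsle : ∑ p ∈ T, ρ (Pn (x p.1 - x p.2)) ≤ A5 k :=
                Finset.sum_le_sum fun p _ => hD _ (htup _ (hEsub _ (hx p.1) _ (hx p.2)))
              have : (0:ℝ) ≤ Kc^(T.card) := by positivity
              exact mul_le_mul_of_nonneg_left hsle this
      have c6 : ρ (m • ∑ j, Pn (x j)) ≤ Kc^m * (m * (Kc^m * A6 k)) := by
        calc ρ (m • ∑ j, Pn (x j)) ≤ Kc^m * (m * ρ (∑ j, Pn (x j))) :=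
              my_rho_nsmul ρ hnonneg hzero hconv τ hτ hΔ₂ m _
          _ ≤ Kc^m * (m * (Kc^m * A6 k)) := by
              have : ρ (∑ j, Pn (x j)) ≤ Kc^m * A6 k := by
                have h := my_rho_finsum ρ hnonneg hzero hconv τ hτ hΔ₂
                  (Finset.univ : Finset (Fin m)) (fun j => Pn (x j))
                rw [Finset.card_univ, Fintype.card_fin] at h
                refine h.trans ?_
                have hsle : ∑ j : Fin m, ρ (Pn (x j)) ≤ A6 k :=
                  Finset.sum_le_sum fun j _ => hD _ (htup _ (hx j))
                have : (0:ℝ) ≤ Kc^m := by positivity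
                exact mul_le_mul_of_nonneg_left hsle this
              gcongr
      have h3 := my_rho_add3 ρ hnonneg habs hconv τ hτ hΔ₂
        (Pn S) (∑ p ∈ T, Pn (x p.1 - x p.2)) (m • ∑ j, Pn (x j))
      refine h3.trans ?_
      gcongr
    -- combine
    have step0 : ρ (myL m x f) ≤ ρ (m • myL m x f) :=
      my_rho_le_nsmul ρ hnonneg hzero hconv m (by omega) _
    have step1 : ρ (m • myL m x f)
        ≤ Kc^2 * (ρ L1 + ρ ((m-1) • L2) + ρ ((m*(m-1)) • L3) + ρ Wn) := by
      rw [hiden]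
      exact my_rho_add4 ρ hnonneg habs hconv τ hτ hΔ₂ _ _ _ _
    refine step0.trans (step1.trans ?_)
    have hRk : R k = Kc^2 * (A1 k + Kc^(m-1) * (((m-1 : ℕ) : ℝ) * A2 k)
      + Kc^(m*(m-1)) * (((m*(m-1) : ℕ) : ℝ) * A3 k)
      + Kc^2 * (A4 k + Kc^(T.card) * A5 k + Kc^m * ((m : ℝ) * (Kc^m * A6 k)))) := rfl
    rw [hRk]
    gcongr
  -- tendsto of R to 0
  have tA1 : Tendsto A1 atTop (𝓝 0) := by
    have harith : Tendsto (fun k : ℕ => 1 + (m-1)*(k+1)) atTop atTop := by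
      apply tendsto_atTop_mono (f := fun k : ℕ => k)
      · intro k
        have h1 : k + 1 ≤ (m-1)*(k+1) := Nat.le_mul_of_pos_left _ (by omega)
        omega
      · exact tendsto_id
    exact (hφ2 x hx).comp harith
  have tA2 : Tendsto A2 atTop (𝓝 0) := hφ2 (fun i => -x i) (fun i => hEneg _ (hx i))
  have tA3 : Tendsto A3 atTop (𝓝 0) := by
    have harith : Tendsto (fun k : ℕ => k + 1) atTop atTop := tendsto_add_atTop_nat 1
    exact (hφ2 x hx).comp harith
  have tA4 : Tendsto A4 atTop (𝓝 0) :=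
    (hφ1 S hSE).comp (tendsto_add_atTop_nat 1)
  have tA5 : Tendsto A5 atTop (𝓝 0) := by
    have := tendsto_finset_sum T (fun p (_ : p ∈ T) =>
      (hφ1 (x p.1 - x p.2) (hEsub _ (hx p.1) _ (hx p.2))).comp (tendsto_add_atTop_nat 1))
    simpa using this
  have tA6 : Tendsto A6 atTop (𝓝 0) := by
    have := tendsto_finset_sum (Finset.univ : Finset (Fin m)) (fun j (_ : j ∈ Finset.univ) =>
      (hφ1 (x j) (hx j)).comp (tendsto_add_atTop_nat 1))
    simpa using this
  have tR : Tendsto R atTop (𝓝 0) := by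
    have t2 : Tendsto (fun k => Kc^(m-1) * (((m-1 : ℕ) : ℝ) * A2 k)) atTop (𝓝 0) := by
      simpa only [mul_zero] using (tA2.const_mul ((m-1 : ℕ) : ℝ)).const_mul (Kc^(m-1))
    have t3 : Tendsto (fun k => Kc^(m*(m-1)) * (((m*(m-1) : ℕ) : ℝ) * A3 k)) atTop (𝓝 0) := by
      simpa only [mul_zero] using (tA3.const_mul ((m*(m-1) : ℕ) : ℝ)).const_mul (Kc^(m*(m-1)))
    have t5 : Tendsto (fun k => Kc^(T.card) * A5 k) atTop (𝓝 0) := by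
      simpa only [mul_zero] using tA5.const_mul (Kc^(T.card))
    have t6 : Tendsto (fun k => Kc^m * ((m : ℝ) * (Kc^m * A6 k))) atTop (𝓝 0) := by
      simpa only [mul_zero] using ((tA6.const_mul (Kc^m)).const_mul ((m : ℝ))).const_mul (Kc^m)
    have tin : Tendsto (fun k => Kc^2 * (A4 k + Kc^(T.card) * A5 k
        + Kc^m * ((m : ℝ) * (Kc^m * A6 k)))) atTop (𝓝 0) := by
      simpa only [mul_zero, add_zero] using ((tA4.add t5).add t6).const_mul (Kc^2)
    have tall : Tendsto (fun k => A1 k + Kc^(m-1) * (((m-1 : ℕ) : ℝ) * A2 k)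
        + Kc^(m*(m-1)) * (((m*(m-1) : ℕ) : ℝ) * A3 k)
        + Kc^2 * (A4 k + Kc^(T.card) * A5 k + Kc^m * ((m : ℝ) * (Kc^m * A6 k)))) atTop (𝓝 0) := by
      simpa only [add_zero, zero_add] using ((tA1.add t2).add t3).add tin
    simpa only [mul_zero] using tall.const_mul (Kc^2)
  have hle : ρ (myL m x f) ≤ 0 := ge_of_tendsto' tR key
  exact (hzero _).mp (le_antisymm hle (hnonneg _))
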